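/- arXiv:2311.10593 — 3 statements merged into one kernel-verified Lean document; each statement's English description precedes it below -/
import Mathlib

section
/- Let G be a connected K₂-hamiltonian finite simple graph and (W,X) a non-trivial partition of V(G) with |X| > 1. If the induced subgraph G[X] contains no two adjacent vertices, then p(G[W − w]) < |X| and k(G[W − w]) < |X| for any vertex w ∈ W adjacent to some vertex in X. -/
/- Definitions following "Generation and New Infinite Families of K₂-hypohamiltonian Graphs"
by Goedgebeur, Renders and Zamfirescu. -/

open scoped Classical

noncomputable section

namespace K2HypoPaper

variable {V : Type}

/-- A graph is *hamiltonian* if it contains a cycle passing through every vertex exactly once. -/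
def IsHamiltonianGraph (G : SimpleGraph V) : Prop :=
  ∃ (a : V) (p : G.Walk a a), p.IsHamiltonianCycle

/-- A graph is *K₂-hamiltonian* if deleting the two endpoints of any edge yields a
hamiltonian graph. -/
def IsK2Hamiltonian (G : SimpleGraph V) : Prop :=
  ∀ u v : V, G.Adj u v → IsHamiltonianGraph (G.induce {x : V | x ≠ u ∧ x ≠ v})

/-- A graph is *hypohamiltonian* if it is non-hamiltonian and every vertex-deleted
subgraph is hamiltonian. -/
def IsHypohamiltonian (G : SimpleGraph V) : Prop :=
  ¬ IsHamiltonianGraph G ∧ ∀ v : V, IsHamiltonianGraph (G.induce {x : V | x ≠ v})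

/-- A graph is *K₂-hypohamiltonian* if it is non-hamiltonian and K₂-hamiltonian. -/
def IsK2Hypohamiltonian (G : SimpleGraph V) : Prop :=
  ¬ IsHamiltonianGraph G ∧ IsK2Hamiltonian G

/-- A family of `n` pairwise vertex-disjoint paths covering all the vertices of `G`. -/
def IsPathCover {n : ℕ} (G : SimpleGraph V) (P : Fin n → (u : V) × (v : V) × G.Walk u v) : Prop :=
  (∀ i, (P i).2.2.IsPath) ∧
  (∀ i j, i ≠ j → ∀ x, x ∈ (P i).2.2.support → x ∉ (P j).2.2.support) ∧
  (∀ x : V, ∃ i, x ∈ (P i).2.2.support)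

/-- `p(G)`: the minimum number of pairwise vertex-disjoint paths needed to cover all
vertices of `G`. -/
def pathCoverNumber (G : SimpleGraph V) : ℕ :=
  sInf {n : ℕ | ∃ P : Fin n → (u : V) × (v : V) × G.Walk u v, IsPathCover G P}

/-- The vertices lying in components of `G` that are isolated vertices or isolated `K₂`'s
(a component of a simple graph has at most two vertices iff it is an isolated vertex or an
isolated edge together with its endpoints). -/
def IVerts (G : SimpleGraph V) : Set V :=
  {v : V | (G.connectedComponentMk v).supp.ncard ≤ 2}

/-- `|I(G)|`: the number of components of `G` that are isolated vertices or isolated `K₂`'s. -/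
def numIComponents (G : SimpleGraph V) : ℕ :=
  {c : G.ConnectedComponent | c.supp.ncard ≤ 2}.ncard

/-- `|V₁(G)|`: the number of vertices of degree `1` in `G`. -/
def degOneCount (G : SimpleGraph V) : ℕ :=
  {v : V | (G.neighborSet v).ncard = 1}.ncard

/-- Fuel-based implementation of the recursive definition of `k(G)`:
`k(G) = 0` if `G` is empty; `k(G) = max {1, ⌈|V₁(G)|/2⌉}` if `I(G) = ∅` but `G` is nonempty;
and `k(G) = |I(G)| + k(G − I(G))` otherwise. -/
def kAux : ℕ → (W : Type) → SimpleGraph W → ℕ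
  | 0, _, _ => 0
  | (m + 1), W, G =>
    if IsEmpty W then 0
    else if IVerts G = ∅ then max 1 ((degOneCount G + 1) / 2)
    else numIComponents G + kAux m ↥((IVerts G)ᶜ) (G.induce ((IVerts G)ᶜ))

/-- `k(G)` (the fuel `Fintype.card V` always suffices for the recursion to bottom out,
since removing the small components once leaves a graph with `I = ∅`). -/
def kNum [Fintype V] (G : SimpleGraph V) : ℕ := kAux (Fintype.card V) V G

variable {β : Type}

def walkOfList (H : SimpleGraph β) : (a : β) → (l : List β) → List.Chain H.Adj a l →
    (v : β) × H.Walk a v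
  | a, [], _ => ⟨a, .nil⟩
  | _, b :: l, h =>
    let w := walkOfList H b l (List.chain_cons.mp h).2
    ⟨w.1, .cons (List.chain_cons.mp h).1 w.2⟩

lemma walkOfList_support (H : SimpleGraph β) : ∀ (a : β) (l : List β)
    (h : List.Chain H.Adj a l), (walkOfList H a l h).2.support = a :: l
  | _, [], _ => rfl
  | a, b :: l, h => by
    rw [walkOfList]
    simp [SimpleGraph.Walk.support_cons, walkOfList_support H b l (List.chain_cons.mp h).2]

lemma walkOfList_fst (H : SimpleGraph β) : ∀ (a : β) (l : List β)
    (h : List.Chain H.Adj a l), (walkOfList H a l h).1 = (a :: l).getLast (by simp)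
  | _, [], _ => rfl
  | a, b :: l, h => by
    rw [walkOfList]
    simp [walkOfList_fst H b l (List.chain_cons.mp h).2, List.getLast_cons]

/-- A walk built from a nonempty chain block. -/
def blockWalk (H : SimpleGraph β) (b : List β) (hne : b ≠ []) (hc : b.Chain' H.Adj) :
    (u : β) × (v : β) × H.Walk u v :=
  ⟨b.head hne, walkOfList H (b.head hne) b.tail (by
    have := hc; rw [← List.cons_head_tail hne] at this; exact @id (List.Chain H.Adj (b.head hne) b.tail) this)⟩

lemma blockWalk_support (H : SimpleGraph β) (b : List β) (hne : b ≠ [])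
    (hc : b.Chain' H.Adj) : (blockWalk H b hne hc).2.2.support = b := by
  rw [blockWalk, walkOfList_support, List.cons_head_tail]

/-- From a list of disjoint nonempty chain blocks covering `S`, bound the path
cover number of the induced graph. -/
lemma pathCoverNumber_le_of_blocks (G : SimpleGraph V) (S : Set V) (bs : List (List V))
    (h1 : ∀ b ∈ bs, b ≠ []) (h2 : ∀ b ∈ bs, b.Chain' G.Adj)
    (h3 : bs.flatten.Nodup) (h4 : ∀ x, x ∈ bs.flatten ↔ x ∈ S) :
    pathCoverNumber (G.induce S) ≤ bs.length := by
  have hmemS : ∀ i : Fin bs.length, ∀ x ∈ bs.get i, x ∈ S := by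
    intro i x hx
    exact (h4 x).mp (List.mem_flatten.mpr ⟨bs.get i, bs.get_mem i, hx⟩)
  set ab : Fin bs.length → List ↥S :=
    fun i => (bs.get i).attachWith (· ∈ S) (hmemS i) with hab
  have habmap : ∀ i, (ab i).map Subtype.val = bs.get i := by
    intro i; simp [hab, List.attachWith_map_subtype_val]
  have habne : ∀ i, ab i ≠ [] := by
    intro i h
    apply h1 (bs.get i) (bs.get_mem i)
    rw [← habmap i, h]; rfl
  have habchain : ∀ i, (ab i).Chain' (G.induce S).Adj := by
    intro i
    have := h2 (bs.get i) (bs.get_mem i)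
    rw [← habmap i] at this
    exact (List.isChain_map Subtype.val).mp this
  have habmem : ∀ i (x : ↥S), x ∈ ab i ↔ (x : V) ∈ bs.get i := by
    intro i x
    constructor
    · intro h
      rw [← habmap i]
      exact List.mem_map.mpr ⟨x, h, rfl⟩
    · intro h
      rw [← habmap i] at h
      obtain ⟨y, hy, hyx⟩ := List.mem_map.mp h
      exact (Subtype.ext hyx : y = x) ▸ hy
  have hpair : List.Pairwise List.Disjoint bs := (List.nodup_flatten.mp h3).2
  have hnodup : ∀ b ∈ bs, b.Nodup := (List.nodup_flatten.mp h3).1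
  have hdisj : ∀ i j : Fin bs.length, i ≠ j → ∀ x : V,
      x ∈ bs.get i → x ∉ bs.get j := by
    intro i j hij x hxi hxj
    rcases lt_or_gt_of_ne (Fin.val_ne_of_ne hij) with h | h
    · exact (List.pairwise_iff_get.mp hpair i j (by exact h)) hxi hxj
    · exact (List.pairwise_iff_get.mp hpair j i (by exact h)) hxj hxi
  refine Nat.sInf_le ⟨fun i => blockWalk (G.induce S) (ab i) (habne i) (habchain i),
    ?_, ?_, ?_⟩
  · intro i
    rw [SimpleGraph.Walk.isPath_def, blockWalk_support]
    exact List.Nodup.of_map Subtype.val ((habmap i).symm ▸ hnodup _ (bs.get_mem i))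
  · intro i j hij x hxi hxj
    rw [blockWalk_support] at hxi hxj
    exact hdisj i j hij x ((habmem i x).mp hxi) ((habmem j x).mp hxj)
  · intro x
    have : (x : V) ∈ bs.flatten := (h4 x).mpr x.2
    obtain ⟨b, hb, hxb⟩ := List.mem_flatten.mp this
    obtain ⟨i, hi⟩ := List.mem_iff_get.mp hb
    refine ⟨i, ?_⟩
    rw [blockWalk_support]
    exact (habmem i x).mpr (hi ▸ hxb)

/-- The set of sizes of path covers is nonempty. -/
lemma coverSet_nonempty [Fintype V] (G : SimpleGraph V) :
    {n : ℕ | ∃ P : Fin n → (u : V) × (v : V) × G.Walk u v, IsPathCover G P}.Nonempty := by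
  refine ⟨Fintype.card V, fun i => ⟨(Fintype.equivFin V).symm i,
    (Fintype.equivFin V).symm i, .nil⟩, ?_, ?_, ?_⟩
  · intro i; exact SimpleGraph.Walk.IsPath.nil
  · intro i j hij x hxi hxj
    simp only [SimpleGraph.Walk.support_nil, List.mem_singleton] at hxi hxj
    exact hij (((Fintype.equivFin V).symm.injective (hxi ▸ hxj : _ = _)))
  · intro x
    exact ⟨Fintype.equivFin V x, by simp⟩

lemma pathCoverNumber_mem [Fintype V] (G : SimpleGraph V) :
    ∃ P : Fin (pathCoverNumber G) → (u : V) × (v : V) × G.Walk u v, IsPathCover G P :=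
  Nat.sInf_mem (coverSet_nonempty G)

/-- All vertices of a walk lie in the connected component of its start. -/
lemma comp_eq_of_mem_support {G : SimpleGraph V} {u v x : V} (p : G.Walk u v)
    (hx : x ∈ p.support) : G.connectedComponentMk x = G.connectedComponentMk u :=
  (SimpleGraph.ConnectedComponent.sound (p.takeUntil x hx).reachable).symm

lemma one_le_pathCoverNumber [Fintype V] [Nonempty V] (G : SimpleGraph V) :
    1 ≤ pathCoverNumber G := by
  obtain ⟨P, _, _, hcov⟩ := pathCoverNumber_mem G
  obtain ⟨i, _⟩ := hcov (Classical.arbitrary V)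
  exact Nat.one_le_iff_ne_zero.mpr (fun h => (h ▸ i).elim0)

/-- An interior vertex of a path has two distinct neighbors. -/
lemma exists_two_neighbors {G : SimpleGraph V} {u v : V} (p : G.Walk u v) (hp : p.IsPath) :
    ∀ x, x ∈ p.support → x ≠ u → x ≠ v → ∃ y z, y ≠ z ∧ G.Adj x y ∧ G.Adj x z := by
  induction p with
  | nil =>
    intro x hx hxu _
    simp only [SimpleGraph.Walk.support_nil, List.mem_singleton] at hx
    exact absurd hx hxu
  | @cons a b c h q ih =>
    intro x hx hxu hxv
    rw [SimpleGraph.Walk.support_cons, List.mem_cons] at hx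
    rcases hx with rfl | hx
    · exact absurd rfl hxu
    by_cases hxb : x = b
    · subst hxb
      cases q with
      | nil => exact absurd rfl hxv
      | @cons _ d _ h' q' =>
        refine ⟨a, d, ?_, h.symm, h'⟩
        intro had
        have : a ∈ (SimpleGraph.Walk.cons h' q').support := by
          rw [had]
          simp [SimpleGraph.Walk.support_cons]
        exact ((SimpleGraph.Walk.cons_isPath_iff _ _).mp hp).2 this
    · exact ih hp.of_cons x hx hxb hxv

lemma degOneCount_le [Fintype V] (G : SimpleGraph V) :
    degOneCount G ≤ 2 * pathCoverNumber G := by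
  classical
  obtain ⟨P, hpath, hdisj, hcov⟩ := pathCoverNumber_mem G
  set D : Set V := {v : V | (G.neighborSet v).ncard = 1} with hD
  have hend : ∀ (i : Fin (pathCoverNumber G)) (x : V), x ∈ (P i).2.2.support → x ∈ D →
      x = (P i).1 ∨ x = (P i).2.1 := by
    intro i x hx hxD
    by_contra hcon
    push_neg at hcon
    obtain ⟨y, z, hyz, hy, hz⟩ :=
      exists_two_neighbors (P i).2.2 (hpath i) x hx hcon.1 hcon.2
    have hsub : {y, z} ⊆ G.neighborSet x := by
      rintro t (rfl | rfl) <;> [exact hy; exact hz]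
    have h2 : ({y, z} : Set V).ncard = 2 := Set.ncard_pair hyz
    have := Set.ncard_le_ncard hsub (G.neighborSet x).toFinite
    rw [h2, hxD] at this
    omega
  have key : ∀ (i : Fin (pathCoverNumber G)) (v v' : ↥D),
      (v : V) ∈ (P i).2.2.support → (v' : V) ∈ (P i).2.2.support →
      (decide ((v : V) = (P i).1) = decide ((v' : V) = (P i).1)) → v = v' := by
    intro i v v' hv hv' h2
    rw [decide_eq_decide] at h2
    by_cases hhead : (v : V) = (P i).1
    · exact Subtype.ext (hhead.trans (h2.mp hhead).symm)
    · have hv2 : (v : V) = (P i).2.1 := (hend i v hv v.2).resolve_left hhead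
      have hv'2 : (v' : V) = (P i).2.1 :=
        (hend i v' hv' v'.2).resolve_left (fun hc => hhead (h2.mpr hc))
      exact Subtype.ext (hv2.trans hv'2.symm)
  set g : ↥D → Fin (pathCoverNumber G) × Bool := fun v =>
    ⟨(hcov v).choose, decide ((v : V) = (P (hcov v).choose).1)⟩ with hg
  have hginj : Function.Injective g := by
    intro v v' hvv'
    have h1 : (hcov (v : V)).choose = (hcov (v' : V)).choose := congrArg Prod.fst hvv'
    have h2 := congrArg Prod.snd hvv'
    simp only [hg] at h2
    rw [← h1] at h2
    have hv : (v : V) ∈ (P (hcov (v : V)).choose).2.2.support := (hcov (v : V)).choose_spec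
    have hv' : (v' : V) ∈ (P (hcov (v : V)).choose).2.2.support := by
      rw [h1]; exact (hcov (v' : V)).choose_spec
    exact key _ v v' hv hv' h2
  have := Nat.card_le_card_of_injective g hginj
  rw [Nat.card_coe_set_eq] at this
  rw [Nat.card_eq_fintype_card, Fintype.card_prod, Fintype.card_fin, Fintype.card_bool] at this
  rw [degOneCount, ← hD]
  omega

lemma blockWalk_fst (H : SimpleGraph β) (b : List β) (hne : b ≠ [])
    (hc : b.Chain' H.Adj) : (blockWalk H b hne hc).1 = b.head hne := rfl

lemma blockWalk_snd (H : SimpleGraph β) (b : List β) (hne : b ≠ [])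
    (hc : b.Chain' H.Adj) : (blockWalk H b hne hc).2.1 = b.getLast hne := by
  rw [blockWalk, walkOfList_fst]
  simp [List.cons_head_tail]

/-- Transfer reachability along a walk whose support stays in `S`. -/
lemma reachable_induce_of_walk {G : SimpleGraph V} {S : Set V} (u v : ↥S)
    (p : G.Walk u.val v.val) (hsupp : ∀ x ∈ p.support, x ∈ S) :
    (G.induce S).Reachable u v := by
  have hne : p.support ≠ [] := p.support_ne_nil
  set ab : List ↥S := p.support.attachWith (· ∈ S) hsupp with hab
  have habmap : ab.map Subtype.val = p.support := by simp [hab]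
  have habne : ab ≠ [] := by
    intro h; apply hne; rw [← habmap, h]; rfl
  have habchain : ab.Chain' (G.induce S).Adj := by
    have := p.isChain_adj_support
    rw [← habmap] at this
    exact (List.isChain_map Subtype.val).mp this
  have hhead : (ab.head habne).val = u.val := by
    have h1 : p.support.head? = some ((ab.head habne).val) := by
      rw [← habmap, List.head?_map, List.head?_eq_head habne]
      rfl
    rw [SimpleGraph.Walk.support_eq_cons, List.head?_cons] at h1
    exact (Option.some_injective _ h1).symm
  have hlast : (ab.getLast habne).val = v.val := by
    have h1 : p.support.getLast? = some ((ab.getLast habne).val) := by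
      rw [← habmap, List.getLast?_map, List.getLast?_eq_getLast habne]
      rfl
    rw [List.getLast?_eq_getLast hne, p.getLast_support] at h1
    exact (Option.some_injective _ h1).symm
  exact ⟨(blockWalk (G.induce S) ab habne habchain).2.2.copy
    ((blockWalk_fst _ _ _ _) ▸ Subtype.ext hhead)
    ((blockWalk_snd _ _ _ _) ▸ Subtype.ext hlast)⟩

lemma IVerts_induce_compl_eq_empty [Fintype V] (G : SimpleGraph V) :
    IVerts (G.induce (IVerts G)ᶜ) = ∅ := by
  ext v
  simp only [IVerts, Set.mem_setOf_eq, Set.mem_empty_iff_false, iff_false, not_le]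
  have hv : ¬ (G.connectedComponentMk v.val).supp.ncard ≤ 2 := by
    have hv2 := v.2
    rw [Set.mem_compl_iff] at hv2
    simpa only [IVerts, Set.mem_setOf_eq] using hv2
  have hsub : (G.connectedComponentMk v.val).supp ⊆ (IVerts G)ᶜ := by
    intro u hu
    rw [SimpleGraph.ConnectedComponent.mem_supp_iff] at hu
    simp only [Set.mem_compl_iff, IVerts, Set.mem_setOf_eq, hu]
    exact hv
  have himg : (G.connectedComponentMk v.val).supp ⊆
      Subtype.val '' ((G.induce (IVerts G)ᶜ).connectedComponentMk v).supp := by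
    intro u hu
    rw [SimpleGraph.ConnectedComponent.mem_supp_iff] at hu
    have hreach : G.Reachable u v.val :=
      (SimpleGraph.ConnectedComponent.exact hu)
    obtain ⟨q⟩ := hreach
    have hq : ∀ x ∈ q.support, x ∈ (IVerts G)ᶜ := by
      intro x hx
      apply hsub
      rw [SimpleGraph.ConnectedComponent.mem_supp_iff]
      have := comp_eq_of_mem_support q hx
      rw [this, hu]
    have := reachable_induce_of_walk (S := (IVerts G)ᶜ) ⟨u, hsub (by
      rw [SimpleGraph.ConnectedComponent.mem_supp_iff]; exact hu)⟩ v q hq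
    exact ⟨⟨u, _⟩, by rw [SimpleGraph.ConnectedComponent.mem_supp_iff]
                      exact SimpleGraph.ConnectedComponent.sound this, rfl⟩
  have := Set.ncard_le_ncard himg (Set.toFinite _)
  rw [Set.ncard_image_of_injective _ Subtype.val_injective] at this
  simp only [IVerts] at this ⊢
  exact iff_of_false (not_le.mpr (lt_of_lt_of_le (not_le.mp hv) this)) (fun h => h)

lemma numI_add_le [Fintype V] (G : SimpleGraph V) :
    numIComponents G + pathCoverNumber (G.induce (IVerts G)ᶜ) ≤ pathCoverNumber G := by
  classical
  obtain ⟨P, hpath, hdisj, hcov⟩ := pathCoverNumber_mem G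
  set small : Fin (pathCoverNumber G) → Prop :=
    fun i => (G.connectedComponentMk (P i).1).supp.ncard ≤ 2 with hsmall
  -- injection from small components into small path indices
  have hstart : ∀ (i : Fin (pathCoverNumber G)) (x : V), x ∈ (P i).2.2.support →
      G.connectedComponentMk x = G.connectedComponentMk (P i).1 := by
    intro i x hx
    have : (P i).2.2.support = ((P i).2.2.copy rfl rfl).support := rfl
    exact comp_eq_of_mem_support (P i).2.2 hx
  set rep : G.ConnectedComponent → V := fun c => c.exists_rep.choose with hrep
  have hrepc : ∀ c, G.connectedComponentMk (rep c) = c := fun c => c.exists_rep.choose_spec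
  set f : {c : G.ConnectedComponent // c.supp.ncard ≤ 2} → {i // small i} :=
    fun c => ⟨(hcov (rep c.1)).choose, by
      show (G.connectedComponentMk (P (hcov (rep c.1)).choose).1).supp.ncard ≤ 2
      rw [← hstart _ _ (hcov (rep c.1)).choose_spec, hrepc]
      exact c.2⟩ with hf
  have hfinj : Function.Injective f := by
    intro c c' hcc'
    have h1 : (hcov (rep c.1)).choose = (hcov (rep c'.1)).choose :=
      congrArg Subtype.val hcc'
    apply Subtype.ext
    rw [← hrepc c.1, ← hrepc c'.1,
      hstart _ _ (hcov (rep c.1)).choose_spec, h1,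
      hstart _ _ (hcov (rep c'.1)).choose_spec]
  have hcard1 : numIComponents G ≤ Fintype.card {i // small i} := by
    have := Fintype.card_le_of_injective f hfinj
    rw [numIComponents, ← Nat.card_coe_set_eq, Nat.card_eq_fintype_card]
    exact this
  -- cover of the complement graph
  set bl : Finset (Fin (pathCoverNumber G)) := Finset.univ.filter (fun i => ¬ small i)
    with hbl
  set bs : List (List V) := bl.toList.map (fun i => (P i).2.2.support) with hbs
  have hmembl : ∀ i, i ∈ bl.toList ↔ ¬ small i := by
    intro i; simp [hbl]
  have hnotI : ∀ (i : Fin (pathCoverNumber G)), ¬ small i →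
      ∀ x ∈ (P i).2.2.support, x ∈ (IVerts G)ᶜ := by
    intro i hi x hx
    simp only [Set.mem_compl_iff, IVerts, Set.mem_setOf_eq]
    rw [hstart i x hx]
    exact hi
  have hcover : pathCoverNumber (G.induce (IVerts G)ᶜ) ≤ bs.length := by
    apply pathCoverNumber_le_of_blocks
    · intro b hb
      obtain ⟨i, _, rfl⟩ := List.mem_map.mp hb
      exact SimpleGraph.Walk.support_ne_nil _
    · intro b hb
      obtain ⟨i, _, rfl⟩ := List.mem_map.mp hb
      exact (P i).2.2.isChain_adj_support
    · rw [List.nodup_flatten]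
      constructor
      · intro b hb
        obtain ⟨i, _, rfl⟩ := List.mem_map.mp hb
        exact (hpath i).support_nodup
      · rw [hbs]
        apply List.Pairwise.map
        · exact fun i j hij x hxi hxj => hdisj i j hij x hxi hxj
        · exact bl.nodup_toList
    · intro x
      rw [List.mem_flatten]
      constructor
      · rintro ⟨b, hb, hxb⟩
        rw [hbs] at hb
        obtain ⟨i, hi, rfl⟩ := List.mem_map.mp hb
        exact hnotI i ((hmembl i).mp hi) x hxb
      · intro hx
        refine ⟨(P (hcov x).choose).2.2.support, ?_, (hcov x).choose_spec⟩
        rw [hbs]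
        apply List.mem_map.mpr
        refine ⟨(hcov x).choose, (hmembl _).mpr ?_, rfl⟩
        show ¬ (G.connectedComponentMk (P (hcov x).choose).1).supp.ncard ≤ 2
        rw [← hstart _ _ (hcov x).choose_spec]
        simpa only [Set.mem_compl_iff, IVerts, Set.mem_setOf_eq] using hx
  have hlen : bs.length = Fintype.card {i // ¬ small i} := by
    rw [hbs, List.length_map, Finset.length_toList, hbl, Fintype.card_subtype]
  have hcompl := Fintype.card_subtype_compl small
  have htot : Fintype.card {i // small i} ≤ Fintype.card (Fin (pathCoverNumber G)) :=
    Fintype.card_subtype_le _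
  rw [Fintype.card_fin] at hcompl htot
  omega

lemma kAux_le_pathCoverNumber_of_empty_IVerts {β : Type} [Fintype β] (H : SimpleGraph β)
    (hI : IVerts H = ∅) (m : ℕ) : kAux m β H ≤ pathCoverNumber H := by
  cases m with
  | zero => simp [kAux]
  | succ m' =>
    rw [kAux]
    by_cases he : IsEmpty β
    · rw [if_pos he]; exact Nat.zero_le _
    · rw [if_neg he, if_pos hI]
      have : Nonempty β := not_isEmpty_iff.mp he
      have h1 := one_le_pathCoverNumber H
      have h2 := degOneCount_le H
      exact max_le h1 (by omega)

lemma kNum_le_pathCoverNumber [Fintype V] (G : SimpleGraph V) :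
    kNum G ≤ pathCoverNumber G := by
  rw [kNum]
  cases h : Fintype.card V with
  | zero => simp [kAux]
  | succ m =>
    rw [kAux]
    have hne : ¬ IsEmpty V := fun hE => by
      rw [Fintype.card_eq_zero_iff.mpr hE] at h
      omega
    rw [if_neg hne]
    by_cases hI : IVerts G = ∅
    · rw [if_pos hI]
      have : Nonempty V := not_isEmpty_iff.mp hne
      have h1 := one_le_pathCoverNumber G
      have h2 := degOneCount_le G
      exact max_le h1 (by omega)
    · rw [if_neg hI]
      have hL1 := numI_add_le G
      have hrest := kAux_le_pathCoverNumber_of_empty_IVerts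
        (G.induce (IVerts G)ᶜ) (IVerts_induce_compl_eq_empty G) m
      omega

/-- Splitting a chain at elements satisfying `p` into nonempty chain blocks. -/
lemma exists_blocks {α : Type} (r : α → α → Prop) (p : α → Bool) :
    ∀ (l : List α), l.Chain' r → ∃ bs : List (List α),
      bs.flatten = l.filter (fun x => ¬ p x) ∧ (∀ b ∈ bs, b ≠ [] ∧ b.Chain' r) ∧
      bs.length ≤ l.countP p + 1 ∧
      (∀ (h : l ≠ []), p (l.head h) → bs.length ≤ l.countP p)
  | [], _ => ⟨[], by simp⟩
  | a :: l, hc => by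
    obtain ⟨bs, hj, hb, hl, hs⟩ := exists_blocks r p l hc.tail
    by_cases hpa : p a
    · refine ⟨bs, by simp [hj, hpa], hb, ?_, ?_⟩
      · simp only [List.countP_cons, hpa, if_pos]; omega
      · intro _ _; simp only [List.countP_cons, hpa, if_pos]; omega
    · match l, hj, hb, hl, hs, hc with
      | [], hj, hb, hl, hs, hc =>
        exact ⟨[[a]], by simp [hpa], by simp; exact List.isChain_singleton a, by simp, by simp [hpa]⟩
      | c :: l', hj, hb, hl, hs, hc =>
        by_cases hpc : p c
        · have hlen : bs.length ≤ (c :: l').countP p := hs (by simp) (by simpa using hpc)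
          refine ⟨[a] :: bs, by simp [hj, hpa], ?_, ?_, ?_⟩
          · intro b hbm
            rcases List.mem_cons.mp hbm with rfl | hbmem
            · simp; exact List.isChain_singleton a
            · exact hb b hbmem
          · simp only [List.countP_cons, hpc, if_true] at hlen
            simp only [List.length_cons, List.countP_cons, hpa, hpc]
            simp only [Bool.false_eq_true, if_false, if_true]
            omega
          · intro _ h; simp [hpa] at h
        · -- first block of bs starts with c; prepend a
          have hcne : c ∈ bs.flatten := by rw [hj]; simp [hpc]
          match bs, hj, hb, hl, hcne with
          | b :: bs', hj, hb, hl, hcne =>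
            have hbne := (hb b (by simp)).1
            match b, hj, hb, hbne with
            | d :: b', hj, hb, _ =>
              have hj' : d :: (b' ++ bs'.flatten) =
                  List.filter (fun x => !p x) (c :: l') := by simpa using hj
              rw [List.filter_cons_of_pos (by simp [hpc])] at hj'
              obtain ⟨rfl, hj2⟩ : d = c ∧ b' ++ bs'.flatten =
                  List.filter (fun x => !p x) l' := by
                constructor <;> [exact (List.cons.injEq _ _ _ _ ▸ hj').1;
                  exact (List.cons.injEq _ _ _ _ ▸ hj').2]
              refine ⟨(a :: d :: b') :: bs', ?_, ?_, ?_, ?_⟩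
              · simpa [hpa] using hj
              · intro b hbm
                rcases List.mem_cons.mp hbm with rfl | hbmem
                · exact ⟨by simp, List.isChain_cons_cons.mpr ⟨(List.isChain_cons_cons.mp hc).1, (hb _ (by simp)).2⟩⟩
                · exact hb _ (by simp [hbmem])
              · simp only [List.length_cons, List.countP_cons, hpa] at hl ⊢
                simp only [Bool.false_eq_true, if_false]
                omega
              · intro _ h; simp [hpa] at h

/-- Lemma: non-adjacent type A and B. Let `G` be a connected
`K₂`-hamiltonian graph and `(W, X)` a non-trivial partition of `V(G)` with `|X| > 1`.
If `G[X]` contains no two adjacent vertices, then `p(G[W − w]) < |X|` and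
`k(G[W − w]) < |X|` for any `w ∈ W` adjacent to a vertex in `X`. -/
theorem nonAdj_typeA_typeB (V : Type) [Fintype V] (G : SimpleGraph V)
    (hconn : G.Connected) (hG : IsK2Hamiltonian G) (W X : Set V)
    (hdisj : Disjoint W X) (hunion : W ∪ X = Set.univ)
    (hWne : W.Nonempty) (hXne : X.Nonempty) (hX1 : 1 < X.ncard)
    (hindep : ∀ v ∈ X, ∀ w ∈ X, ¬ G.Adj v w)
    (w : V) (hw : w ∈ W) (hwadj : ∃ x ∈ X, G.Adj w x) :
    pathCoverNumber (G.induce (W \ {w})) < X.ncard ∧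
      kNum (G.induce (W \ {w})) < X.ncard := by
  obtain ⟨x₀, hx₀X, hadj⟩ := hwadj
  have hWX : ∀ v, v ∈ W → v ∉ X := fun v hv hvX =>
    Set.disjoint_left.mp hdisj hv hvX
  have hXW : ∀ v, v ∈ X → v ≠ w := fun v hv hvw => hWX w hw (hvw ▸ hv)
  -- pick x₁ ∈ X, x₁ ≠ x₀
  obtain ⟨a₁, b₁, ha₁, hb₁, hab₁⟩ := (Set.one_lt_ncard_iff (X.toFinite)).mp hX1
  obtain ⟨x₁, hx₁X, hx₁ne⟩ : ∃ x₁ ∈ X, x₁ ≠ x₀ := by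
    by_cases h : a₁ = x₀
    · exact ⟨b₁, hb₁, fun hb => hab₁ (h.trans hb.symm)⟩
    · exact ⟨a₁, ha₁, h⟩
  set S₀ : Set V := {x : V | x ≠ w ∧ x ≠ x₀} with hS₀
  obtain ⟨a, c, hc⟩ := hG w x₀ hadj
  have hx₁S₀ : x₁ ∈ S₀ := ⟨hXW x₁ hx₁X, hx₁ne⟩
  set vx₁ : ↥S₀ := ⟨x₁, hx₁S₀⟩ with hvx₁
  have hmem : vx₁ ∈ c.support :=
    @SimpleGraph.Walk.IsHamiltonianCycle.mem_support _ (fun a b => Classical.propDecidable (a = b)) _ _ _ hc vx₁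
  set c' := @SimpleGraph.Walk.rotate _ _ _ (fun a b => Classical.propDecidable (a = b)) c _ hmem with hc'def
  have hc' : c'.IsCycle := @SimpleGraph.Walk.IsCycle.rotate _ _ _ _ (fun a b => Classical.propDecidable (a = b)) _ hmem (@SimpleGraph.Walk.IsHamiltonianCycle.toIsCycle _ (fun a b => Classical.propDecidable (a = b)) _ _ _ hc)
  set L : List ↥S₀ := c'.support.tail with hL
  have hLnodup : L.Nodup := hc'.support_nodup
  have hLne : L ≠ [] := by
    have h3 := hc'.three_le_length
    have : c'.support.tail.length = c'.length := by
      simp [SimpleGraph.Walk.length_support]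
    intro h
    rw [← hL, h] at this
    simp at this
    omega
  have hLall : ∀ v : ↥S₀, v ∈ L := by
    intro v
    have hv : v ∈ c.support :=
      @SimpleGraph.Walk.IsHamiltonianCycle.mem_support _ (fun a b => Classical.propDecidable (a = b)) _ _ _ hc v
    have hvt : v ∈ c.support.tail := by
      rcases List.mem_cons.mp (c.support_eq_cons ▸ hv) with h | h
      · subst h
        have hne : c.support.tail ≠ [] := by
          have h3 := (@SimpleGraph.Walk.IsHamiltonianCycle.toIsCycle _ (fun a b => Classical.propDecidable (a = b)) _ _ _ hc).three_le_length
          have : c.support.tail.length = c.length := by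
            simp [SimpleGraph.Walk.length_support]
          intro hcon
          rw [hcon] at this
          simp at this
          omega
        have hgl : c.support.tail.getLast hne = v := by
          rw [List.getLast_tail]
          exact c.getLast_support
        have hm := List.getLast_mem hne
        rw [hgl] at hm
        exact hm
      · exact h
    exact (List.IsRotated.mem_iff (@SimpleGraph.Walk.support_rotate _ _ _ (fun a b => Classical.propDecidable (a = b)) c _ hmem)).mpr hvt
  set L' : List V := L.map Subtype.val with hL'
  have hL'nodup : L'.Nodup := hLnodup.map Subtype.val_injective
  have hL'ne : L' ≠ [] := by
    intro h
    rw [hL'] at h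
    exact hLne (List.map_eq_nil_iff.mp h)
  have hL'chain : L'.Chain' G.Adj := by
    have := c'.isChain_adj_support.tail
    rw [← hL] at this
    exact (List.isChain_map Subtype.val).mpr this
  have hL'mem : ∀ x : V, x ∈ L' ↔ (x ≠ w ∧ x ≠ x₀) := by
    intro x
    constructor
    · intro hx
      obtain ⟨y, _, rfl⟩ := List.mem_map.mp hx
      exact y.2
    · intro hx
      exact List.mem_map.mpr ⟨⟨x, hx⟩, hLall _, rfl⟩
  have hgetLast : L'.getLast hL'ne = x₁ := by
    have h1 : L.getLast hLne = vx₁ := by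
      show c'.support.tail.getLast hLne = vx₁
      rw [List.getLast_tail]
      exact c'.getLast_support
    have h2 : L'.getLast? = some ((L.getLast hLne).val) := by
      rw [hL', List.getLast?_map, List.getLast?_eq_getLast hLne]
      rfl
    rw [List.getLast?_eq_getLast hL'ne] at h2
    rw [Option.some_injective _ h2, h1]
  set M : List V := L'.dropLast with hM
  have hMchain : M.Chain' G.Adj := hL'chain.prefix (L'.dropLast_prefix)
  have happend : M ++ [x₁] = L' := by
    rw [← hgetLast, hM]
    exact List.dropLast_append_getLast hL'ne
  set p : V → Bool := fun v => decide (v ∈ X) with hp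
  obtain ⟨bs, hjoin, hblocks, hlen, _⟩ := exists_blocks G.Adj p M hMchain
  -- counting
  have hcount : L'.countP p = M.countP p + 1 := by
    rw [← happend, List.countP_append]
    simp [hp, hx₁X]
  have hcountle : L'.countP p ≤ X.ncard - 1 := by
    rw [List.countP_eq_length_filter]
    have hfn : (L'.filter p).Nodup := hL'nodup.filter p
    rw [← List.toFinset_card_of_nodup hfn]
    have hsub : (L'.filter p).toFinset ⊆ (X \ {x₀}).toFinset := by
      intro x hx
      rw [List.mem_toFinset, List.mem_filter] at hx
      rw [Set.mem_toFinset]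
      refine ⟨by simpa [hp] using hx.2, ?_⟩
      simp only [Set.mem_singleton_iff]
      exact ((hL'mem x).mp hx.1).2
    have := Finset.card_le_card hsub
    rw [← Set.ncard_eq_toFinset_card' (X \ {x₀}),
      Set.ncard_diff_singleton_of_mem hx₀X] at this
    exact this
  have hbslen : bs.length < X.ncard := by
    have : bs.length ≤ X.ncard - 1 := by omega
    omega
  -- blocks give a path cover of G[W \ {w}]
  have hflatten : ∀ x : V, x ∈ bs.flatten ↔ x ∈ W \ {w} := by
    intro x
    rw [hjoin, List.mem_filter]
    constructor
    · rintro ⟨hxM, hxp⟩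
      have hxX : x ∉ X := by simpa [hp] using hxp
      have hxL' : x ∈ L' := by rw [← happend]; exact List.mem_append_left _ hxM
      have hxw : x ≠ w := ((hL'mem x).mp hxL').1
      have hxW : x ∈ W := by
        have : x ∈ W ∪ X := hunion ▸ Set.mem_univ x
        exact this.resolve_right hxX
      exact ⟨hxW, by simpa using hxw⟩
    · rintro ⟨hxW, hxw⟩
      simp only [Set.mem_singleton_iff] at hxw
      have hxX : x ∉ X := hWX x hxW
      have hxL' : x ∈ L' := (hL'mem x).mpr ⟨hxw, fun h => hxX (h ▸ hx₀X)⟩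
      have hxM : x ∈ M := by
        rw [← happend] at hxL'
        rcases List.mem_append.mp hxL' with h | h
        · exact h
        · simp only [List.mem_singleton] at h
          exact absurd (h ▸ hx₁X) hxX
      exact ⟨hxM, by simpa [hp] using hxX⟩
  have hMnodup : M.Nodup := hL'nodup.sublist (List.dropLast_sublist L')
  have hcover : pathCoverNumber (G.induce (W \ {w})) ≤ bs.length := by
    apply pathCoverNumber_le_of_blocks
    · exact fun b hb => (hblocks b hb).1
    · exact fun b hb => (hblocks b hb).2
    · rw [hjoin]; exact hMnodup.filter _
    · exact hflatten
  refine ⟨lt_of_le_of_lt hcover hbslen, ?_⟩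
  exact lt_of_le_of_lt (le_trans (kNum_le_pathCoverNumber _) hcover) hbslen


end K2HypoPaper
end
end

section
/- Let G be a K₂-hypohamiltonian finite simple graph containing a 4-cycle with vertices u, v, w, x in this cyclic order (so uv, vw, wx, xu are edges of G). Then u has at least two neighbours lying outside N[w]. -/
/- Definitions following "Generation and New Infinite Families of K₂-hypohamiltonian Graphs"
by Goedgebeur, Renders and Zamfirescu. -/

open scoped Classical

noncomputable section

namespace K2HypoPaper

variable {V : Type}

/-- `N[v]`: the closed neighbourhood of `v` in `G`, i.e. `v` together with all its
neighbours. -/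
def closedNbhd (G : SimpleGraph V) (v : V) : Set V :=
  insert v (G.neighborSet v)

open SimpleGraph List

section Auxiliary

/-- Any two `DecidableEq` instances give the same notion of hamiltonian cycle. -/
lemma hamCast {α : Type*} {i1 i2 : DecidableEq α} {G : SimpleGraph α} {a : α} {p : G.Walk a a}
    (hp : @SimpleGraph.Walk.IsHamiltonianCycle α i1 G a p) :
    @SimpleGraph.Walk.IsHamiltonianCycle α i2 G a p := by
  cases Subsingleton.elim i1 i2
  exact hp

/-- Reversal of a hamiltonian cycle is a hamiltonian cycle. -/
lemma ham_reverse {α : Type*} [DecidableEq α] {G : SimpleGraph α} {a : α} {p : G.Walk a a}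
    (hp : p.IsHamiltonianCycle) : p.reverse.IsHamiltonianCycle := by
  have h3 := hp.isCycle.three_le_length
  have hperm : p.reverse.support.tail.Perm p.support.tail := by
    refine (List.perm_cons a).mp ?_
    have key : (a :: p.reverse.support.tail) = p.support.reverse := by
      rw [← Walk.support_reverse]; exact (p.reverse.support_eq_cons).symm
    rw [key]
    calc p.support.reverse ~ p.support := List.reverse_perm _
      _ = a :: p.support.tail := p.support_eq_cons
  rw [Walk.isHamiltonianCycle_iff_isCycle_and_support_count_tail_eq_one] at hp ⊢
  refine ⟨?_, fun y => (hperm.count_eq y).trans (hp.2 y)⟩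
  rw [Walk.isCycle_def]
  refine ⟨hp.1.isTrail.reverse _, ?_, hperm.nodup_iff.mpr hp.1.support_nodup⟩
  intro h
  have h0 : p.length = 0 := by rw [← Walk.length_reverse p, h]; rfl
  omega

/-- Rotation of a hamiltonian cycle is a hamiltonian cycle. -/
lemma ham_rotate {α : Type*} [DecidableEq α] {G : SimpleGraph α} {a b : α} {p : G.Walk a a}
    (hp : p.IsHamiltonianCycle) (hb : b ∈ p.support) : (p.rotate b hb).IsHamiltonianCycle := by
  rw [Walk.isHamiltonianCycle_iff_isCycle_and_support_count_tail_eq_one] at hp ⊢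
  exact ⟨hp.1.rotate hb, fun y => ((Walk.support_rotate p b hb).perm.count_eq y).trans (hp.2 y)⟩

/-- If a hamiltonian cycle of the graph induced on `S` starts `u' — c — ⋯` and `w` is
adjacent to `c`, where `u' — v — w` is a path outside `S`, then `G` is hamiltonian. -/
lemma build_ham (G : SimpleGraph V) {v w : V} {S : Set V}
    (hSv : v ∉ S) (hSw : w ∉ S)
    {u' c : ↥S}
    (huv : G.Adj ↑u' v) (hvw : G.Adj v w) (hwc : G.Adj w ↑c)
    (h : (G.induce S).Adj u' c) (r : (G.induce S).Walk c u')
    (hq : (Walk.cons h r).IsHamiltonianCycle)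
    (hSall : ∀ y : V, y ≠ v → y ≠ w → y ∈ S) :
    IsHamiltonianGraph G := by
  classical
  have hneS : ∀ z : ↥S, (↑z : V) ≠ v ∧ (↑z : V) ≠ w := fun z =>
    ⟨fun hz => hSv (hz ▸ z.2), fun hz => hSw (hz ▸ z.2)⟩
  let f : (G.induce S) →g G := ⟨Subtype.val, fun {a b} hab => hab⟩
  have hf : ⇑f = (Subtype.val : ↥S → V) := rfl
  let r' : G.Walk ↑c ↑u' := r.map f
  have hsupp : r'.support = r.support.map Subtype.val := by
    show (r.map f).support = _
    rw [Walk.support_map, hf]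
  have hedge : r'.edges = r.edges.map (Sym2.map Subtype.val) := by
    show (r.map f).edges = _
    rw [Walk.edges_map, hf]
  rw [Walk.isHamiltonianCycle_iff_isCycle_and_support_count_tail_eq_one] at hq
  have hq2 : ∀ z : ↥S, r.support.count z = 1 := by
    intro z
    have := hq.2 z
    rw [Walk.support_cons, List.tail_cons] at this
    convert this
  have hrtrail := hq.1.isTrail.edges_nodup
  rw [Walk.edges_cons] at hrtrail
  have hrnodup : r.edges.Nodup := (List.nodup_cons.mp hrtrail).2
  have hrsnodup : r.support.Nodup := by
    have := hq.1.support_nodup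
    rwa [Walk.support_cons, List.tail_cons] at this
  have hmemS : ∀ y ∈ r'.support, y ∈ S := by
    intro y hy
    rw [hsupp] at hy
    obtain ⟨z, _, rfl⟩ := List.mem_map.mp hy
    exact z.2
  have hvns : v ∉ r'.support := fun hv => hSv (hmemS v hv)
  have hwns : w ∉ r'.support := fun hw => hSw (hmemS w hw)
  have hvw' : v ≠ w := G.ne_of_adj hvw
  have hvne : ∀ e ∈ r'.edges, v ∉ e := by
    intro e he hv
    obtain ⟨y, rfl⟩ := Sym2.mem_iff_exists.mp hv
    exact hvns (r'.fst_mem_support_of_mem_edges he)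
  have hwne : ∀ e ∈ r'.edges, w ∉ e := by
    intro e he hw
    obtain ⟨y, rfl⟩ := Sym2.mem_iff_exists.mp hw
    exact hwns (r'.fst_mem_support_of_mem_edges he)
  have hnodupS : r'.support.Nodup := by
    rw [hsupp]; exact hrsnodup.map Subtype.val_injective
  have hnodupE : r'.edges.Nodup := by
    rw [hedge]; exact hrnodup.map (Sym2.map.injective Subtype.val_injective)
  refine ⟨↑u', Walk.cons huv (Walk.cons hvw (Walk.cons hwc r')), ?_⟩
  rw [Walk.isHamiltonianCycle_iff_isCycle_and_support_count_tail_eq_one]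
  constructor
  · rw [Walk.isCycle_def]
    refine ⟨?_, by simp, ?_⟩
    · rw [Walk.isTrail_def]
      simp only [Walk.edges_cons, List.nodup_cons, List.mem_cons]
      refine ⟨?_, ?_, ?_, hnodupE⟩
      · push_neg
        refine ⟨?_, ?_, fun hmem => hvne _ hmem (by simp)⟩
        · intro heq
          rcases Sym2.eq_iff.mp heq with ⟨h1, _⟩ | ⟨h1, _⟩
          · exact (hneS u').1 h1
          · exact (hneS u').2 h1
        · intro heq
          rcases Sym2.eq_iff.mp heq with ⟨h1, _⟩ | ⟨_, h2⟩
          · exact (hneS u').2 h1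
          · exact hvw' h2
      · push_neg
        refine ⟨?_, fun hmem => hvne _ hmem (by simp)⟩
        intro heq
        rcases Sym2.eq_iff.mp heq with ⟨h1, _⟩ | ⟨h1, _⟩
        · exact hvw' h1
        · exact (hneS c).1 h1.symm
      · exact fun hmem => hwne _ hmem (by simp)
    · simp only [Walk.support_cons, List.tail_cons, List.nodup_cons]
      exact ⟨by simp [hvw', hvns], ⟨hwns, hnodupS⟩⟩
  · intro y
    simp only [Walk.support_cons, List.tail_cons]
    by_cases hyv : y = v
    · subst hyv
      rw [List.count_cons_self, List.count_cons_of_ne (Ne.symm hvw'),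
        List.count_eq_zero_of_not_mem hvns]
    · rw [List.count_cons_of_ne (Ne.symm hyv)]
      by_cases hyw : y = w
      · subst hyw
        rw [List.count_cons_self, List.count_eq_zero_of_not_mem hwns]
      · rw [List.count_cons_of_ne (Ne.symm hyw)]
        have hyS : y ∈ S := hSall y hyv hyw
        have hy : y = ((⟨y, hyS⟩ : ↥S) : V) := rfl
        rw [hy, hsupp, List.count_map_of_injective _ _ Subtype.val_injective]
        exact hq2 ⟨y, hyS⟩

end Auxiliary

/-- 4-cycle obstruction lemma. Let `G` be a `K₂`-hypohamiltonian graph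
containing a `4`-cycle `uvwx`. Then `u` has at least two neighbours not in `N[w]`. -/
theorem fourCycle_obstruction (V : Type) [Fintype V] (G : SimpleGraph V)
    (hG : IsK2Hypohamiltonian G) (u v w x : V)
    (hdist : u ≠ v ∧ u ≠ w ∧ u ≠ x ∧ v ≠ w ∧ v ≠ x ∧ w ≠ x)
    (huv : G.Adj u v) (hvw : G.Adj v w) (hwx : G.Adj w x) (hxu : G.Adj x u) :
    2 ≤ (G.neighborSet u \ closedNbhd G w).ncard := by
  classical
  obtain ⟨hnh, hK2⟩ := hG
  obtain ⟨hunv, hunw, -, hvnw, -, -⟩ := hdist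
  have huS : u ∈ {y : V | y ≠ v ∧ y ≠ w} := ⟨hunv, hunw⟩
  have hSv : v ∉ {y : V | y ≠ v ∧ y ≠ w} := fun hv => hv.1 rfl
  have hSw : w ∉ {y : V | y ≠ v ∧ y ≠ w} := fun hw => hw.2 rfl
  have hSall : ∀ y : V, y ≠ v → y ≠ w → y ∈ {y : V | y ≠ v ∧ y ≠ w} :=
    fun y h1 h2 => ⟨h1, h2⟩
  obtain ⟨a0, p, hp⟩ := hK2 v w hvw
  set u' : ↥{y : V | y ≠ v ∧ y ≠ w} := ⟨u, huS⟩ with hu'def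
  have hu' : u' ∈ p.support := Walk.IsHamiltonianCycle.mem_support (hamCast hp) u'
  have hq : (p.rotate u' hu').IsHamiltonianCycle := ham_rotate (hamCast hp) hu'
  obtain ⟨c, hqc, r, hqe⟩ := Walk.not_nil_iff.mp hq.isCycle.not_nil
  rw [hqe] at hq
  have hqr := ham_reverse hq
  obtain ⟨b, hqb, r2, hqe2⟩ := Walk.not_nil_iff.mp hqr.isCycle.not_nil
  rw [hqe2] at hqr
  -- the two neighbours of u on the cycle
  have hadjc : G.Adj u ↑c := hqc
  have hadjb : G.Adj u ↑b := hqb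
  have huv' : G.Adj (↑u' : V) v := huv
  -- neither of them is adjacent to w
  have hnc : ¬ G.Adj w ↑c := fun hwc =>
    hnh (build_ham G hSv hSw huv' hvw hwc hqc r hq hSall)
  have hnb : ¬ G.Adj w ↑b := fun hwb =>
    hnh (build_ham G hSv hSw huv' hvw hwb hqb r2 hqr hSall)
  -- and they are distinct
  have hbc : (↑b : V) ≠ ↑c := by
    intro hbceq
    have hbc' : b = c := Subtype.ext hbceq
    subst hbc'
    have hrev : (Walk.cons hqc r).edges.reverse = s(u', b) :: r2.edges := by
      rw [← Walk.edges_reverse, hqe2, Walk.edges_cons]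
    have heq : s(u', b) :: r.edges = r2.edges.reverse ++ [s(u', b)] := by
      have h5 := congrArg List.reverse hrev
      rw [List.reverse_reverse, List.reverse_cons, Walk.edges_cons] at h5
      exact h5
    have hs : s(u', b) ∉ r.edges := by
      have h6 := hq.isCycle.isTrail.edges_nodup
      rw [Walk.edges_cons, List.nodup_cons] at h6
      exact h6.1
    have hlen3 := hq.isCycle.three_le_length
    rw [Walk.length_cons] at hlen3
    cases hr2 : r2.edges.reverse with
    | nil =>
      rw [hr2, List.nil_append] at heq
      have h7 : r.edges = [] := by injection heq
      have hrl : r.length = 0 := by rw [← Walk.length_edges, h7]; rfl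
      omega
    | cons e0 t =>
      rw [hr2, List.cons_append] at heq
      injection heq with h1 h2
      exact hs (h2 ▸ List.mem_append_right t (List.mem_singleton_self _))
  -- conclude
  have hfin : (G.neighborSet u \ closedNbhd G w).Finite := Set.toFinite _
  have hcmem : (↑c : V) ∈ G.neighborSet u \ closedNbhd G w := by
    refine ⟨hadjc, ?_⟩
    intro hmem
    rcases Set.mem_insert_iff.mp hmem with h1 | h1
    · exact c.2.2 h1
    · exact hnc h1
  have hbmem : (↑b : V) ∈ G.neighborSet u \ closedNbhd G w := by
    refine ⟨hadjb, ?_⟩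
    intro hmem
    rcases Set.mem_insert_iff.mp hmem with h1 | h1
    · exact b.2.2 h1
    · exact hnb h1
  calc (2 : ℕ) = ({(↑c : V), ↑b} : Set V).ncard := (Set.ncard_pair (Ne.symm hbc)).symm
    _ ≤ (G.neighborSet u \ closedNbhd G w).ncard := by
        refine Set.ncard_le_ncard ?_ hfin
        rw [Set.insert_subset_iff]
        exact ⟨hcmem, Set.singleton_subset_iff.mpr hbmem⟩

end K2HypoPaper
end
end

section
/- Let G be a K₂-hypohamiltonian finite simple graph containing a diamond with vertices a, b, c, d and central edge ac. Then a and c each have degree at least 5 in G. -/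
/- Definitions following "Generation and New Infinite Families of K₂-hypohamiltonian Graphs"
by Goedgebeur, Renders and Zamfirescu. -/

open scoped Classical

noncomputable section

namespace K2HypoPaper

variable {V : Type}

open SimpleGraph Walk in
private lemma count_support_tail_reverse {α : Type*} {G : SimpleGraph α} {a : α}
    (p : G.Walk a a) (v : α) :
    p.reverse.support.tail.count v = p.support.tail.count v := by
  have h1 : p.support.count v = p.support.tail.count v + if a = v then 1 else 0 := by
    conv_lhs => rw [support_eq_cons p, List.count_cons]
    by_cases h : a = v <;> simp [h]
  have h2 : p.reverse.support.count v
      = p.reverse.support.tail.count v + if a = v then 1 else 0 := by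
    conv_lhs => rw [support_eq_cons p.reverse, List.count_cons]
    by_cases h : a = v <;> simp [h]
  have h3 : p.reverse.support.count v = p.support.count v := by
    rw [support_reverse, List.count_reverse]
  omega

open SimpleGraph Walk in
private lemma hamCycle_rotate {α : Type*} {G : SimpleGraph α} {a u : α} {p : G.Walk a a}
    (hp : p.IsHamiltonianCycle) (h : u ∈ p.support) : (p.rotate u h).IsHamiltonianCycle := by
  refine ⟨hp.isCycle.rotate h, fun v => ?_⟩
  rw [support_tail_of_not_nil _ (hp.isCycle.rotate h).not_nil,
    ((support_rotate p u h).perm).count_eq, ← support_tail_of_not_nil _ hp.isCycle.not_nil]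
  exact hp.isHamiltonian_tail v

open SimpleGraph Walk in
private lemma hamCycle_reverse {α : Type*} {G : SimpleGraph α} {a : α} {p : G.Walk a a}
    (hp : p.IsHamiltonianCycle) : p.reverse.IsHamiltonianCycle := by
  have hcount : ∀ v, p.reverse.support.tail.count v = 1 := by
    intro v
    rw [count_support_tail_reverse, ← support_tail_of_not_nil _ hp.isCycle.not_nil]
    exact hp.isHamiltonian_tail v
  have hnil : p.reverse ≠ Walk.nil := by
    intro h
    exact hp.isCycle.ne_nil (by simpa using congrArg Walk.reverse h)
  have hcyc : p.reverse.IsCycle := by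
    rw [isCycle_def]
    refine ⟨hp.isCycle.isTrail.reverse _, hnil, ?_⟩
    exact List.nodup_iff_count_le_one.2 fun v => (hcount v).le
  exact ⟨hcyc, fun v => by rw [support_tail_of_not_nil _ hcyc.not_nil]; exact hcount v⟩

open SimpleGraph Walk in
private lemma hamCycle_mem_support {α : Type*} {G : SimpleGraph α} {a : α} {p : G.Walk a a}
    (hp : p.IsHamiltonianCycle) (v : α) : v ∈ p.support := hp.mem_support v

open SimpleGraph in
/-- inclusion homomorphism of an induced subgraph -/
private def incl (G : SimpleGraph V) (S : Set V) : G.induce S →g G where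
  toFun := Subtype.val
  map_rel' := fun h => h

open SimpleGraph Walk in
private lemma build (G : SimpleGraph V) (a b c d : V)
    [instS : DecidableEq ↥{x : V | x ≠ b ∧ x ≠ c}]
    (haS : a ∈ {x : V | x ≠ b ∧ x ≠ c}) (hdS : d ∈ {x : V | x ≠ b ∧ x ≠ c})
    (hab : G.Adj a b) (hbc : G.Adj b c) (hcd : G.Adj c d)
    (h : (G.induce {x : V | x ≠ b ∧ x ≠ c}).Adj ⟨a, haS⟩ ⟨d, hdS⟩)
    (q : (G.induce {x : V | x ≠ b ∧ x ≠ c}).Walk ⟨d, hdS⟩ ⟨a, haS⟩)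
    (hp : (Walk.cons h q).IsHamiltonianCycle) :
    IsHamiltonianGraph G := by
  set L : List V := q.support.map Subtype.val with hLdef
  set E : List (Sym2 V) := q.edges.map (Sym2.map (Subtype.val : {x : V | x ≠ b ∧ x ≠ c} → V)) with hEdef
  -- facts from hp
  have hq_sup_nodup : q.support.Nodup := by
    have := hp.isCycle.support_nodup
    simpa using this
  have hq_edges_nodup : q.edges.Nodup := by
    have := hp.isCycle.isTrail.edges_nodup
    rw [edges_cons] at this
    exact this.of_cons
  have hq_count : ∀ z : {x : V | x ≠ b ∧ x ≠ c}, q.support.count z = 1 := by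
    intro z
    have := hp.isHamiltonian_tail z
    rw [tail_cons] at this
    rw [← support_copy q (getVert_zero q).symm rfl]
    convert this using 2
    · apply lawful_beq_subsingleton
    · rfl
  -- facts about L
  have hLnodup : L.Nodup := hq_sup_nodup.map Subtype.val_injective
  have hbL : b ∉ L := by
    simp only [hLdef, List.mem_map, not_exists, not_and]
    exact fun z _ hz => z.2.1 hz
  have hcL : c ∉ L := by
    simp only [hLdef, List.mem_map, not_exists, not_and]
    exact fun z _ hz => z.2.2 hz
  have hLcount : ∀ v : V, v ≠ b → v ≠ c → L.count v = 1 := by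
    intro v h1 h2
    exact (List.count_map_of_injective q.support Subtype.val
      Subtype.val_injective ⟨v, h1, h2⟩).trans (hq_count ⟨v, h1, h2⟩)
  -- facts about E
  have hE : ∀ e ∈ E, b ∉ e ∧ c ∉ e := by
    intro e he
    obtain ⟨e0, _, rfl⟩ := List.mem_map.1 he
    constructor <;>
    · intro hmemb
      obtain ⟨z, _, hzv⟩ := Sym2.mem_map.1 hmemb
      first
        | exact z.2.1 hzv
        | exact z.2.2 hzv
  have hEnodup : E.Nodup := hq_edges_nodup.map (Sym2.map.injective Subtype.val_injective)
  -- the new walk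
  let w : G.Walk a a := Walk.cons hab (Walk.cons hbc (Walk.cons hcd (q.map (incl G {x : V | x ≠ b ∧ x ≠ c}))))
  have hwsupp : w.support = a :: b :: c :: L := by
    simp only [w, support_cons, Walk.support_map, hLdef]
    show a :: b :: c :: (q.map (incl G {x : V | x ≠ b ∧ x ≠ c})).support = _
    rw [Walk.support_map]
    rfl
  have hwedges : w.edges = s(a,b) :: s(b,c) :: s(c,d) :: E := by
    simp only [w, edges_cons, edges_map, hEdef]
    show s(a,b) :: s(b,c) :: s(c,d) :: (q.map (incl G {x : V | x ≠ b ∧ x ≠ c})).edges = _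
    rw [Walk.edges_map]
    rfl
  have hane : a ≠ b ∧ a ≠ c := haS
  have hdne : d ≠ b ∧ d ≠ c := hdS
  have hwtrail : w.edges.Nodup := by
    rw [hwedges]
    refine List.nodup_cons.2 ⟨?_, List.nodup_cons.2 ⟨?_, List.nodup_cons.2 ⟨?_, hEnodup⟩⟩⟩
    · intro hmem
      rcases List.mem_cons.1 hmem with heq | hmem
      · rw [Sym2.eq_iff] at heq
        rcases heq with ⟨h1, h2⟩ | ⟨h1, h2⟩
        · exact hane.1 h1
        · exact hane.2 h1
      rcases List.mem_cons.1 hmem with heq | hmem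
      · rw [Sym2.eq_iff] at heq
        rcases heq with ⟨h1, h2⟩ | ⟨h1, h2⟩
        · exact hane.2 h1
        · exact hbc.ne h2
      · exact (hE _ hmem).1 (by simp)
    · intro hmem
      rcases List.mem_cons.1 hmem with heq | hmem
      · rw [Sym2.eq_iff] at heq
        rcases heq with ⟨h1, h2⟩ | ⟨h1, h2⟩
        · exact hbc.ne h1
        · exact hdne.1 h1.symm
      · exact (hE _ hmem).1 (by simp)
    · intro hmem
      exact (hE _ hmem).2 (by simp)
  have hwtailnodup : w.support.tail.Nodup := by
    rw [hwsupp]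
    refine List.nodup_cons.2 ⟨?_, List.nodup_cons.2 ⟨hcL, hLnodup⟩⟩
    simp only [List.mem_cons]
    rintro (h1 | h1)
    · exact hbc.ne h1
    · exact hbL h1
  have hwnil : w ≠ Walk.nil := by simp [w]
  have hwcyc : w.IsCycle := ⟨⟨⟨hwtrail⟩, hwnil⟩, hwtailnodup⟩
  refine ⟨a, w, hwcyc, fun v => ?_⟩
  rw [support_tail_of_not_nil _ hwcyc.not_nil, hwsupp, List.tail_cons]
  by_cases hvb : v = b
  · subst hvb
    rw [List.count_cons_self, List.count_cons_of_ne (Ne.symm hbc.ne),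
      List.count_eq_zero.2 hbL]
  by_cases hvc : v = c
  · subst hvc
    rw [List.count_cons_of_ne hbc.ne, List.count_cons_self,
      List.count_eq_zero.2 hcL]
  · rw [List.count_cons_of_ne (Ne.symm hvb), List.count_cons_of_ne (Ne.symm hvc)]
    exact hLcount v hvb hvc

open SimpleGraph Walk in
private lemma key [Fintype V] (G : SimpleGraph V)
    (hnot : ¬ IsHamiltonianGraph G) (hK2 : IsK2Hamiltonian G)
    (a b c d : V) (hbd : b ≠ d) (hcd' : c ≠ d)
    (hab : G.Adj a b) (hac : G.Adj a c) (had : G.Adj a d)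
    (hbc : G.Adj b c) (hcd : G.Adj c d) :
    5 ≤ (G.neighborSet a).ncard := by
  by_contra hlt
  push_neg at hlt
  obtain ⟨r, p, hp⟩ := hK2 b c hbc
  letI instS : DecidableEq ↥{x : V | x ≠ b ∧ x ≠ c} := fun a b => Classical.propDecidable (a = b)
  have haS : a ∈ {x : V | x ≠ b ∧ x ≠ c} := ⟨hab.ne, hac.ne⟩
  have hdS : d ∈ {x : V | x ≠ b ∧ x ≠ c} := ⟨hbd.symm, hcd'.symm⟩
  have hmem : (⟨a, haS⟩ : {x : V | x ≠ b ∧ x ≠ c}) ∈ p.support := hamCycle_mem_support hp _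
  have hp1 : (p.rotate _ hmem).IsHamiltonianCycle := hamCycle_rotate hp hmem
  set p1 := p.rotate _ hmem with hp1def
  obtain ⟨x, hax, q, hq⟩ := Walk.not_nil_iff.mp hp1.isCycle.not_nil
  have hp1' := hq ▸ hp1
  have hp2 : p1.reverse.IsHamiltonianCycle := hamCycle_reverse hp1
  obtain ⟨y, hay, q2, hq2⟩ := Walk.not_nil_iff.mp hp2.isCycle.not_nil
  have hp2' := hq2 ▸ hp2
  -- x and y are distinct
  have hne : x ≠ y := by
    intro hxeq
    have hE1 : p1.edges = s((⟨a, haS⟩ : {x : V | x ≠ b ∧ x ≠ c}), x) :: q.edges := by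
      rw [hq, edges_cons]
    have hE2 : p1.edges.reverse
        = s((⟨a, haS⟩ : {x : V | x ≠ b ∧ x ≠ c}), y) :: q2.edges := by
      rw [← Walk.edges_reverse, hq2, edges_cons]
    have hlen : 3 ≤ p1.edges.length := by
      rw [Walk.length_edges]; exact hp1.isCycle.three_le_length
    have heq : q2.edges.reverse ++ [s((⟨a, haS⟩ : {x : V | x ≠ b ∧ x ≠ c}), y)]
        = s((⟨a, haS⟩ : {x : V | x ≠ b ∧ x ≠ c}), x) :: q.edges := by
      rw [← hE1, ← List.reverse_reverse p1.edges, hE2, List.reverse_cons]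
    have hmem2 : s((⟨a, haS⟩ : {x : V | x ≠ b ∧ x ≠ c}), y) ∈ q.edges := by
      cases hq2e : q2.edges.reverse with
      | nil =>
        rw [hq2e, List.nil_append] at heq
        have : p1.edges.length = 1 := by rw [hE1, ← heq]; rfl
        omega
      | cons z zs =>
        rw [hq2e] at heq
        have := (List.cons.injEq _ _ _ _).mp heq
        rw [← this.2]
        simp
    have hnd := hp1.isCycle.isTrail.edges_nodup
    rw [hE1] at hnd
    rw [← hxeq] at hmem2
    exact (List.nodup_cons.1 hnd).1 hmem2
  have hxN : G.Adj a (x : V) := hax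
  have hyN : G.Adj a (y : V) := hay
  by_cases hdx : x = (⟨d, hdS⟩ : {x : V | x ≠ b ∧ x ≠ c})
  · subst hdx
    exact hnot (build (instS := instS) G a b c d haS hdS hab hbc hcd hax q hp1')
  by_cases hdy : y = (⟨d, hdS⟩ : {x : V | x ≠ b ∧ x ≠ c})
  · subst hdy
    exact hnot (build (instS := instS) G a b c d haS hdS hab hbc hcd hay q2 hp2')
  · have hxd : (x : V) ≠ d := fun h => hdx (Subtype.ext h)
    have hyd : (y : V) ≠ d := fun h => hdy (Subtype.ext h)
    have hxb : (x : V) ≠ b := x.2.1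
    have hxc : (x : V) ≠ c := x.2.2
    have hyb : (y : V) ≠ b := y.2.1
    have hyc : (y : V) ≠ c := y.2.2
    have hxyv : (x : V) ≠ (y : V) := fun h => hne (Subtype.ext h)
    set F : Finset V := {b, c, d, (x : V), (y : V)} with hFdef
    have hsub : (F : Set V) ⊆ G.neighborSet a := by
      intro v hv
      simp only [hFdef, Finset.coe_insert, Set.mem_insert_iff, Finset.coe_singleton,
        Set.mem_singleton_iff] at hv
      rcases hv with rfl | rfl | rfl | rfl | rfl
      · exact hab
      · exact hac
      · exact had
      · exact hxN
      · exact hyN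
    have hcard : F.card = 5 := by
      rw [hFdef,
        Finset.card_insert_of_notMem (by simp [hbc.ne, hbd, Ne.symm hxb, Ne.symm hyb]),
        Finset.card_insert_of_notMem (by simp [hcd', Ne.symm hxc, Ne.symm hyc]),
        Finset.card_insert_of_notMem (by simp [Ne.symm hxd, Ne.symm hyd]),
        Finset.card_insert_of_notMem (by simp [hxyv]),
        Finset.card_singleton]
    have hge : 5 ≤ (G.neighborSet a).ncard := by
      calc 5 = (F : Set V).ncard := by rw [Set.ncard_coe_finset, hcard]
        _ ≤ (G.neighborSet a).ncard := Set.ncard_le_ncard hsub (Set.toFinite _)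
    omega


/-- Corollary. Let `G` be a `K₂`-hypohamiltonian graph containing a
diamond with vertices `a, b, c, d` and central edge `ac` (i.e. `ab`, `bc`, `cd`, `da`
and `ac` are edges of the diamond subgraph while `bd` is not). Then the degrees of `a`
and `c` in `G` are at least `5`. -/
theorem diamond_degree (V : Type) [Fintype V] (G : SimpleGraph V)
    (hG : IsK2Hypohamiltonian G) (a b c d : V)
    (hdist : a ≠ b ∧ a ≠ c ∧ a ≠ d ∧ b ≠ c ∧ b ≠ d ∧ c ≠ d)
    (hab : G.Adj a b) (hbc : G.Adj b c) (hcd : G.Adj c d) (hda : G.Adj d a)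
    (hac : G.Adj a c) :
    5 ≤ (G.neighborSet a).ncard ∧ 5 ≤ (G.neighborSet c).ncard := by
  obtain ⟨hnot, hK2⟩ := hG
  obtain ⟨h1, h2, h3, h4, h5, h6⟩ := hdist
  constructor
  · exact key G hnot hK2 a b c d h5 h6 hab hac hda.symm hbc hcd
  · exact key G hnot hK2 c b a d h5 h3 hbc.symm hac.symm hcd hab.symm hda.symm

end K2HypoPaper
end
end
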